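/- arXiv:1705.01466 — 3 statements merged into one kernel-verified Lean document; each statement's English description precedes it below -/
import Mathlib

section
/- Let M ≥ 1 be an integer and let F : ℝ^M → ℝ be strictly convex on ℝ^M (i.e., F(λx + (1−λ)y) < λF(x) + (1−λ)F(y) for all x ≠ y and λ ∈ (0,1)). Let μ ∈ (0,1), let a ∈ ℝ^M, and let (a_j) be a sequence in ℝ^M such that μ·F(a_j) + (1−μ)·F(a) − F(μ·a_j + (1−μ)·a) → 0 as j → ∞. Then a_j → a. -/
open Filter Topology

lemma slope_aux (φ : ℝ → ℝ) (hφ : ConvexOn ℝ Set.univ φ) (μ s t : ℝ)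
    (hμ0 : 0 < μ) (hμ1 : μ < 1) (hs : 0 < s) (hst : s ≤ t) :
    φ (μ*t) - φ (μ*s) ≤ μ * (φ t - φ s) := by
  rcases eq_or_lt_of_le hst with rfl | hst
  · simp
  have hμst : μ*s < μ*t := by nlinarith
  have h1 : (φ (μ*t) - φ (μ*s)) / (μ*t - μ*s) ≤ (φ t - φ (μ*s)) / (t - μ*s) :=
    hφ.secant_mono trivial trivial trivial hμst.ne' (by nlinarith : μ*s < t).ne'
      (by nlinarith)
  have h2 : (φ (μ*s) - φ t) / (μ*s - t) ≤ (φ s - φ t) / (s - t) :=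
    hφ.secant_mono trivial trivial trivial (by nlinarith : μ*s < t).ne
      hst.ne (by nlinarith)
  have e2 : (φ (μ*s) - φ t) / (μ*s - t) = (φ t - φ (μ*s)) / (t - μ*s) := by
    rw [← neg_div_neg_eq]; ring_nf
  have e3 : (φ s - φ t) / (s - t) = (φ t - φ s) / (t - s) := by
    rw [← neg_div_neg_eq]; ring_nf
  rw [e2, e3] at h2
  have h3 : (φ (μ*t) - φ (μ*s)) / (μ*t - μ*s) ≤ (φ t - φ s) / (t - s) := h1.trans h2
  rw [div_le_div_iff₀ (by nlinarith) (by nlinarith)] at h3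
  nlinarith

/-- If `F : ℝ^M → ℝ` is strictly convex, `μ ∈ (0,1)` and
`μ F(a_j) + (1-μ) F(a) - F(μ a_j + (1-μ) a) → 0`, then `a_j → a`. -/
theorem stmt2 (M : ℕ) (hM : 1 ≤ M)
    (F : EuclideanSpace ℝ (Fin M) → ℝ)
    (hF : StrictConvexOn ℝ (Set.univ : Set (EuclideanSpace ℝ (Fin M))) F)
    (μ : ℝ) (hμ0 : 0 < μ) (hμ1 : μ < 1)
    (a : EuclideanSpace ℝ (Fin M)) (aj : ℕ → EuclideanSpace ℝ (Fin M))
    (hconv : Tendsto (fun j => μ * F (aj j) + (1 - μ) * F a - F (μ • aj j + (1 - μ) • a))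
      atTop (𝓝 0)) :
    Tendsto aj atTop (𝓝 a) := by
  have hconvF : ConvexOn ℝ (Set.univ : Set (EuclideanSpace ℝ (Fin M))) F := hF.convexOn
  have hFc : Continuous F := by
    rw [← continuousOn_univ]
    exact hconvF.continuousOn isOpen_univ
  set G : EuclideanSpace ℝ (Fin M) → ℝ :=
    fun x => μ * F x + (1 - μ) * F a - F (μ • x + (1 - μ) • a) with hG
  have hGc : Continuous G := by fun_prop
  have hGpos : ∀ x : EuclideanSpace ℝ (Fin M), x ≠ a → 0 < G x := by
    intro x hx
    have key := hF.2 (Set.mem_univ x) (Set.mem_univ a) hx hμ0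
      (show (0:ℝ) < 1 - μ by linarith) (by ring)
    simp only [smul_eq_mul] at key
    have : G x = μ * F x + (1 - μ) * F a - F (μ • x + (1 - μ) • a) := rfl
    rw [this]
    linarith
  -- ray monotonicity
  have hray : ∀ (v : EuclideanSpace ℝ (Fin M)) (s t : ℝ), 0 < s → s ≤ t →
      G (a + s • v) ≤ G (a + t • v) := by
    intro v s t hs hst
    set φ : ℝ → ℝ := fun r => F (a + r • v) with hφdef
    have hφ : ConvexOn ℝ Set.univ φ := by
      refine ⟨convex_univ, fun p _ q _ α β hα hβ hαβ => ?_⟩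
      have key := hconvF.2 (Set.mem_univ (a + p • v)) (Set.mem_univ (a + q • v)) hα hβ hαβ
      have e : α • (a + p • v) + β • (a + q • v) = (α + β) • a + (α * p + β * q) • v := by
        module
      rw [e, hαβ, one_smul] at key
      simpa [hφdef, smul_smul] using key
    have ecomb : ∀ r : ℝ, μ • (a + r • v) + (1 - μ) • a = a + (μ * r) • v := by
      intro r
      have : μ • (a + r • v) + (1 - μ) • a = (μ + (1 - μ)) • a + (μ * r) • v := by module
      rw [this]; norm_num
    have key := slope_aux φ hφ μ s t hμ0 hμ1 hs hst
    simp only [hG, ecomb]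
    show μ * φ s + (1 - μ) * F a - φ (μ * s) ≤ μ * φ t + (1 - μ) * F a - φ (μ * t)
    linarith
  -- conclude
  rw [Metric.tendsto_atTop]
  intro ε hε
  have hSne : (Metric.sphere a ε).Nonempty := by
    refine ⟨a + ε • EuclideanSpace.single ⟨0, hM⟩ (1:ℝ), ?_⟩
    simp [Metric.mem_sphere, dist_eq_norm, norm_smul, EuclideanSpace.norm_single,
      abs_of_pos hε]
  obtain ⟨x₀, hx₀S, hmin⟩ := (isCompact_sphere a ε).exists_isMinOn hSne hGc.continuousOn
  have hx₀a : x₀ ≠ a := by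
    intro h
    rw [Metric.mem_sphere, h] at hx₀S
    simp at hx₀S
    linarith
  have hc : 0 < G x₀ := hGpos x₀ hx₀a
  have hconv' : Tendsto (fun j => G (aj j)) atTop (𝓝 0) := hconv
  have hev : ∀ᶠ j in atTop, G (aj j) < G x₀ := hconv'.eventually_lt_const hc
  obtain ⟨N, hN⟩ := hev.exists_forall_of_atTop
  refine ⟨N, fun n hn => ?_⟩
  by_contra hcon
  push_neg at hcon
  rw [dist_eq_norm] at hcon
  set t := ‖aj n - a‖ with ht
  have ht0 : 0 < t := lt_of_lt_of_le hε hcon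
  set v : EuclideanSpace ℝ (Fin M) := t⁻¹ • (aj n - a) with hv
  have htv : a + t • v = aj n := by
    rw [hv, smul_smul, mul_inv_cancel₀ ht0.ne', one_smul]
    abel
  have hεv : a + ε • v ∈ Metric.sphere a ε := by
    rw [Metric.mem_sphere, dist_eq_norm]
    have e : a + ε • v - a = ε • v := by abel
    rw [e, norm_smul, hv, norm_smul, Real.norm_eq_abs, Real.norm_eq_abs,
      abs_of_pos hε, abs_of_pos (inv_pos.2 ht0), ← ht]
    field_simp
  have h1 : G (a + ε • v) ≤ G (a + t • v) := hray v ε t hε hcon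
  rw [htv] at h1
  have h2 : G x₀ ≤ G (a + ε • v) := hmin hεv
  have h3 := hN n hn
  linarith
end

section
/- Let n > r ≥ 1 be integers, let p ≥ 1 be a real number, and let R > 0. Write points of ℝ^n = ℝ^r × ℝ^{n−r} as x = (x', x''). Let v : ℝ^r × ℝ^{n−r} → ℝ be a continuously differentiable function with compact support such that v(x', x'') = 0 whenever ‖x''‖ ≥ R. Then ∫_{ℝ^n} |v(x)|^p dx ≤ (2R)^p · ∫_{ℝ^n} ‖∇''v(x)‖^p dx, where ∇''v(x) denotes the derivative at x'' of the partial map y ↦ v(x', y), i.e., the gradient of v in the last n−r variables. -/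
set_option maxHeartbeats 2000000

open MeasureTheory Set ENNReal
open scoped RealInnerProductSpace

lemma aux_holder {α : Type*} [MeasurableSpace α] (μ : Measure α) {p : ℝ} (hp : 1 ≤ p)
    {f : α → ℝ≥0∞} (hf : AEMeasurable f μ) :
    (∫⁻ a, f a ∂μ) ^ p ≤ (μ Set.univ) ^ (p - 1) * ∫⁻ a, f a ^ p ∂μ := by
  rcases eq_or_lt_of_le hp with h1 | h1
  · simp [← h1]
  have hp0 : (0:ℝ) < p := lt_trans one_pos h1
  have hpq : p.HolderConjugate (Real.conjExponent p) := Real.HolderConjugate.conjExponent h1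
  set q := Real.conjExponent p with hq
  have h := ENNReal.lintegral_mul_le_Lp_mul_Lq μ hpq hf
    (aemeasurable_const : AEMeasurable (fun _ : α => (1:ℝ≥0∞)) μ)
  simp only [Pi.mul_apply, mul_one, ENNReal.one_rpow, lintegral_const, one_mul] at h
  have hqinv : q⁻¹ = 1 - p⁻¹ := by
    have := hpq.inv_add_inv_eq_one; linarith
  have hq1 : 1/q * p = p - 1 := by
    rw [one_div, hqinv]; field_simp
  calc (∫⁻ a, f a ∂μ) ^ p
      ≤ ((∫⁻ a, f a ^ p ∂μ) ^ (1/p) * (μ Set.univ) ^ (1/q)) ^ p :=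
        ENNReal.rpow_le_rpow h hp0.le
    _ = (μ Set.univ) ^ (p - 1) * ∫⁻ a, f a ^ p ∂μ := by
        rw [ENNReal.mul_rpow_of_nonneg _ _ hp0.le, ← ENNReal.rpow_mul, ← ENNReal.rpow_mul,
          one_div_mul_cancel hp0.ne', ENNReal.rpow_one, hq1, mul_comm]

/-- Vertical Poincaré inequality: for `v : ℝ^r × ℝ^{n-r} → ℝ` continuously differentiable with
compact support, vanishing where `‖x''‖ ≥ R`, one has
`∫ |v|^p ≤ (2R)^p ∫ ‖∇''v‖^p`, where `∇''v` is the gradient of `v` in the last `n-r`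
variables. -/
theorem stmt15 (n r : ℕ) (hr : 1 ≤ r) (hrn : r < n) (p R : ℝ) (hp : 1 ≤ p) (hR : 0 < R)
    (v : EuclideanSpace ℝ (Fin r) × EuclideanSpace ℝ (Fin (n - r)) → ℝ)
    (hv : ContDiff ℝ 1 v) (hsupp : HasCompactSupport v)
    (hvan : ∀ x : EuclideanSpace ℝ (Fin r) × EuclideanSpace ℝ (Fin (n - r)),
      R ≤ ‖x.2‖ → v x = 0) :
    ∫ x : EuclideanSpace ℝ (Fin r) × EuclideanSpace ℝ (Fin (n - r)), |v x| ^ p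
      ≤ (2 * R) ^ p *
        ∫ x : EuclideanSpace ℝ (Fin r) × EuclideanSpace ℝ (Fin (n - r)),
          ‖fderiv ℝ (fun y => v (x.1, y)) x.2‖ ^ p := by
  have hp0 : (0:ℝ) < p := lt_of_lt_of_le one_pos hp
  have hpos : 0 < n - r := Nat.sub_pos_of_lt hrn
  set L : ℝ := 2 * R with hLdef
  have hL0 : 0 < L := by positivity
  set i0 : Fin (n - r) := ⟨0, hpos⟩ with hi0
  set e : EuclideanSpace ℝ (Fin (n - r)) := EuclideanSpace.single i0 (1:ℝ) with he'
  have he : ‖e‖ = 1 := by simp [he', EuclideanSpace.norm_single]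
  set D : EuclideanSpace ℝ (Fin r) × EuclideanSpace ℝ (Fin (n - r)) →
      (EuclideanSpace ℝ (Fin (n - r)) →L[ℝ] ℝ) :=
    fun x => (fderiv ℝ v x).comp (ContinuousLinearMap.inr ℝ _ _) with hD
  have hdiff : Differentiable ℝ v := hv.differentiable one_ne_zero
  have hpart : ∀ x : EuclideanSpace ℝ (Fin r) × EuclideanSpace ℝ (Fin (n - r)),
      HasFDerivAt (fun y => v (x.1, y)) (D x) x.2 := fun x =>
    ((hdiff (x.1, x.2)).hasFDerivAt.comp x.2 (hasFDerivAt_prodMk_right x.1 x.2))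
  have hfd : ∀ x : EuclideanSpace ℝ (Fin r) × EuclideanSpace ℝ (Fin (n - r)),
      fderiv ℝ (fun y => v (x.1, y)) x.2 = D x := fun x => (hpart x).fderiv
  have hDc : Continuous D := (hv.continuous_fderiv one_ne_zero).clm_comp continuous_const
  have hDs : HasCompactSupport D := by
    apply (hsupp.fderiv (𝕜 := ℝ)).mono
    intro x hx
    simp only [Function.mem_support, hD] at hx ⊢
    intro h; apply hx; rw [h]; ext y; simp
  set G : EuclideanSpace ℝ (Fin r) × EuclideanSpace ℝ (Fin (n - r)) → ℝ :=
    fun x => ‖D x‖ ^ p with hG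
  have hGnn : ∀ x, 0 ≤ G x := fun x => Real.rpow_nonneg (norm_nonneg _) p
  have hGc : Continuous G := hDc.norm.rpow_const (fun x => Or.inr hp0.le)
  have hGs : HasCompactSupport G := by
    apply hDs.comp_left (g := fun u : EuclideanSpace ℝ (Fin (n - r)) →L[ℝ] ℝ => ‖u‖ ^ p)
    simp [Real.zero_rpow hp0.ne']
  have hGint : Integrable G := hGc.integrable_of_hasCompactSupport hGs
  have hvc : Continuous fun x : EuclideanSpace ℝ (Fin r) × EuclideanSpace ℝ (Fin (n - r)) =>
      |v x| ^ p := hv.continuous.abs.rpow_const (fun x => Or.inr hp0.le)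
  -- pointwise FTC bound
  have hDcont : ∀ x : EuclideanSpace ℝ (Fin r) × EuclideanSpace ℝ (Fin (n - r)),
      Continuous fun s : ℝ => D (x.1, x.2 + s • e) := fun x =>
    hDc.comp (continuous_const.prodMk (continuous_const.add (continuous_id.smul continuous_const)))
  have key1 : ∀ x : EuclideanSpace ℝ (Fin r) × EuclideanSpace ℝ (Fin (n - r)),
      |v x| ≤ ∫ s in (0:ℝ)..L, ‖D (x.1, x.2 + s • e)‖ := by
    intro x
    by_cases hx : R ≤ ‖x.2‖
    · rw [hvan x hx, abs_zero]
      exact intervalIntegral.integral_nonneg hL0.le (fun s _ => norm_nonneg _)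
    push_neg at hx
    have hg : ∀ s : ℝ, HasDerivAt (fun t : ℝ => v (x.1, x.2 + t • e))
        (D (x.1, x.2 + s • e) e) s := by
      intro s
      have h1 : HasDerivAt (fun t : ℝ => x.2 + t • e) e s := by
        simpa using ((hasDerivAt_id s).smul_const e).const_add x.2
      have h2 := (hpart (x.1, x.2 + s • e)).comp_hasDerivAt s h1
      exact h2
    have hftc : ∫ s in (0:ℝ)..L, D (x.1, x.2 + s • e) e
        = v (x.1, x.2 + L • e) - v (x.1, x.2 + (0:ℝ) • e) :=
      intervalIntegral.integral_eq_sub_of_hasDerivAt (fun s _ => hg s)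
        (((hDcont x).clm_apply continuous_const).intervalIntegrable 0 L)
    have hvL : v (x.1, x.2 + L • e) = 0 := by
      apply hvan
      have h1 : |⟪x.2, e⟫| ≤ ‖x.2‖ := by
        simpa [he] using abs_real_inner_le_norm x.2 e
      have h2 : ⟪x.2 + L • e, e⟫ = ⟪x.2, e⟫ + L := by
        rw [inner_add_left, real_inner_smul_left, real_inner_self_eq_norm_sq, he]
        ring
      have h3 : ⟪x.2 + L • e, e⟫ ≤ ‖x.2 + L • e‖ := by
        simpa [he] using real_inner_le_norm (x.2 + L • e) e
      have h4 := (abs_le.mp h1).1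
      show R ≤ ‖(x.2 + L • e : EuclideanSpace ℝ (Fin (n - r)))‖
      rw [hLdef] at h2
      nlinarith
    have hv0 : v x = -∫ s in (0:ℝ)..L, D (x.1, x.2 + s • e) e := by
      rw [hftc, hvL]; simp
    rw [hv0, abs_neg]
    calc |∫ s in (0:ℝ)..L, D (x.1, x.2 + s • e) e|
        ≤ ∫ s in (0:ℝ)..L, |D (x.1, x.2 + s • e) e| :=
          intervalIntegral.abs_integral_le_integral_abs hL0.le
      _ ≤ ∫ s in (0:ℝ)..L, ‖D (x.1, x.2 + s • e)‖ := by
          apply intervalIntegral.integral_mono_on hL0.le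
            (((hDcont x).clm_apply continuous_const).abs.intervalIntegrable 0 L)
            ((hDcont x).norm.intervalIntegrable 0 L)
          intro s _
          calc |D (x.1, x.2 + s • e) e| = ‖D (x.1, x.2 + s • e) e‖ := (Real.norm_eq_abs _).symm
            _ ≤ ‖D (x.1, x.2 + s • e)‖ * ‖e‖ := (D _).le_opNorm e
            _ = ‖D (x.1, x.2 + s • e)‖ := by rw [he, mul_one]
  -- pointwise Hölder bound, in ℝ≥0∞
  have key2 : ∀ x : EuclideanSpace ℝ (Fin r) × EuclideanSpace ℝ (Fin (n - r)),
      ENNReal.ofReal (|v x| ^ p) ≤ ENNReal.ofReal L ^ (p - 1) *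
        ∫⁻ s in Ioc (0:ℝ) L, ENNReal.ofReal (G (x.1, x.2 + s • e)) := by
    intro x
    have hmeas : AEMeasurable (fun s : ℝ => ENNReal.ofReal ‖D (x.1, x.2 + s • e)‖)
        (volume.restrict (Ioc 0 L)) :=
      (ENNReal.continuous_ofReal.comp (hDcont x).norm).aemeasurable
    have h1 : ENNReal.ofReal |v x|
        ≤ ∫⁻ s in Ioc (0:ℝ) L, ENNReal.ofReal ‖D (x.1, x.2 + s • e)‖ := by
      calc ENNReal.ofReal |v x|
          ≤ ENNReal.ofReal (∫ s in (0:ℝ)..L, ‖D (x.1, x.2 + s • e)‖) :=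
            ENNReal.ofReal_le_ofReal (key1 x)
        _ = ∫⁻ s in Ioc (0:ℝ) L, ENNReal.ofReal ‖D (x.1, x.2 + s • e)‖ := by
            rw [intervalIntegral.integral_of_le hL0.le,
              ofReal_integral_eq_lintegral_ofReal
                ((hDcont x).norm.integrableOn_Ioc)
                (ae_of_all _ fun s => norm_nonneg _)]
    have h2 := aux_holder (volume.restrict (Ioc (0:ℝ) L)) hp hmeas
    rw [Measure.restrict_apply_univ, Real.volume_Ioc, sub_zero] at h2
    calc ENNReal.ofReal (|v x| ^ p)
        = ENNReal.ofReal |v x| ^ p := (ENNReal.ofReal_rpow_of_nonneg (abs_nonneg _) hp0.le).symm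
      _ ≤ (∫⁻ s in Ioc (0:ℝ) L, ENNReal.ofReal ‖D (x.1, x.2 + s • e)‖) ^ p :=
          ENNReal.rpow_le_rpow h1 hp0.le
      _ ≤ ENNReal.ofReal L ^ (p - 1) *
            ∫⁻ s in Ioc (0:ℝ) L, ENNReal.ofReal ‖D (x.1, x.2 + s • e)‖ ^ p := h2
      _ = ENNReal.ofReal L ^ (p - 1) *
            ∫⁻ s in Ioc (0:ℝ) L, ENNReal.ofReal (G (x.1, x.2 + s • e)) := by
          congr 1
          refine lintegral_congr fun s => ?_
          rw [hG, ← ENNReal.ofReal_rpow_of_nonneg (norm_nonneg _) hp0.le]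
  have hshift : ∀ (x : EuclideanSpace ℝ (Fin r) × EuclideanSpace ℝ (Fin (n - r))) (s : ℝ),
      ((x.1, x.2 + s • e) : EuclideanSpace ℝ (Fin r) × EuclideanSpace ℝ (Fin (n - r)))
        = x + ((0 : EuclideanSpace ℝ (Fin r)), s • e) := by
    intro x s
    simp [Prod.ext_iff]
  -- main lintegral chain
  have hswapmeas : AEMeasurable (Function.uncurry fun
        (x : EuclideanSpace ℝ (Fin r) × EuclideanSpace ℝ (Fin (n - r))) (s : ℝ) =>
        ENNReal.ofReal (G (x + ((0 : EuclideanSpace ℝ (Fin r)), s • e))))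
      (volume.prod (volume.restrict (Ioc (0:ℝ) L))) := by
    apply Continuous.aemeasurable
    apply ENNReal.continuous_ofReal.comp
    apply hGc.comp
    exact continuous_fst.add (Continuous.prodMk continuous_const
      ((continuous_snd.smul continuous_const)))
  have main : ∫⁻ x, ENNReal.ofReal (|v x| ^ p)
      ≤ ENNReal.ofReal ((2 * R) ^ p) * ∫⁻ x, ENNReal.ofReal (G x) := by
    have hcne : ENNReal.ofReal L ^ (p - 1) ≠ ⊤ :=
      ENNReal.rpow_ne_top_of_nonneg (by linarith) ENNReal.ofReal_ne_top
    calc ∫⁻ x, ENNReal.ofReal (|v x| ^ p)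
        ≤ ∫⁻ x, ENNReal.ofReal L ^ (p - 1) * ∫⁻ s in Ioc (0:ℝ) L,
            ENNReal.ofReal (G (x + ((0 : EuclideanSpace ℝ (Fin r)), s • e))) := by
          apply lintegral_mono
          intro x
          have := key2 x
          simp only [hshift x] at this
          exact this
      _ = ENNReal.ofReal L ^ (p - 1) * ∫⁻ x, ∫⁻ s in Ioc (0:ℝ) L,
            ENNReal.ofReal (G (x + ((0 : EuclideanSpace ℝ (Fin r)), s • e))) :=
          lintegral_const_mul' _ _ hcne
      _ = ENNReal.ofReal L ^ (p - 1) * ∫⁻ s in Ioc (0:ℝ) L, ∫⁻ x,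
            ENNReal.ofReal (G (x + ((0 : EuclideanSpace ℝ (Fin r)), s • e))) := by
          rw [lintegral_lintegral_swap hswapmeas]
      _ = ENNReal.ofReal L ^ (p - 1) * ∫⁻ s in Ioc (0:ℝ) L, ∫⁻ x, ENNReal.ofReal (G x) := by
          congr 1
          refine lintegral_congr fun s => ?_
          rw [Measure.volume_eq_prod]
          haveI : ((volume : Measure (EuclideanSpace ℝ (Fin r))).prod
              (volume : Measure (EuclideanSpace ℝ (Fin (n - r))))).IsAddRightInvariant :=
            Measure.prod.instIsAddRightInvariant
          exact lintegral_add_right_eq_self (fun x => ENNReal.ofReal (G x)) _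
      _ = ENNReal.ofReal L ^ (p - 1) * (ENNReal.ofReal L * ∫⁻ x, ENNReal.ofReal (G x)) := by
          rw [lintegral_const, Measure.restrict_apply_univ, Real.volume_Ioc, sub_zero]
          ring
      _ = ENNReal.ofReal ((2 * R) ^ p) * ∫⁻ x, ENNReal.ofReal (G x) := by
          rw [← mul_assoc]
          congr 1
          have h5 : ENNReal.ofReal L ^ (p-1) * ENNReal.ofReal L ^ (1:ℝ)
              = ENNReal.ofReal L ^ p := by
            rw [← ENNReal.rpow_add _ _ (ENNReal.ofReal_pos.mpr hL0).ne' ENNReal.ofReal_ne_top]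
            norm_num
          rw [← ENNReal.ofReal_rpow_of_pos hL0, ← h5, ENNReal.rpow_one]
  -- convert to Bochner integrals
  have hvint : Integrable (fun x : EuclideanSpace ℝ (Fin r) × EuclideanSpace ℝ (Fin (n - r)) =>
      |v x| ^ p) := by
    apply hvc.integrable_of_hasCompactSupport
    apply hsupp.comp_left (g := fun t : ℝ => |t| ^ p)
    simp [Real.zero_rpow hp0.ne']
  have hGofreal := ofReal_integral_eq_lintegral_ofReal hGint (ae_of_all _ hGnn)
  simp only [hfd]
  rw [integral_eq_lintegral_of_nonneg_ae (ae_of_all _ fun x => Real.rpow_nonneg (abs_nonneg _) p)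
      hvc.aestronglyMeasurable,
    integral_eq_lintegral_of_nonneg_ae (ae_of_all _ hGnn) hGc.aestronglyMeasurable]
  have hne : ENNReal.ofReal ((2 * R) ^ p) * ∫⁻ x, ENNReal.ofReal (G x) ≠ ⊤ := by
    rw [← hGofreal]
    exact ENNReal.mul_ne_top ENNReal.ofReal_ne_top ENNReal.ofReal_ne_top
  calc (∫⁻ x, ENNReal.ofReal (|v x| ^ p)).toReal
      ≤ (ENNReal.ofReal ((2 * R) ^ p) * ∫⁻ x, ENNReal.ofReal (G x)).toReal :=
        ENNReal.toReal_mono hne main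
    _ = (2 * R) ^ p * (∫⁻ x, ENNReal.ofReal (G x)).toReal := by
        rw [ENNReal.toReal_mul, ENNReal.toReal_ofReal (Real.rpow_nonneg (by positivity) p)]
end

section
/- Let p ≥ 2 be a real number and m ≥ 1 an integer. Then there exists a constant β > 0, depending only on p and m, such that for all ξ, ζ ∈ ℝ^m and all θ, μ ∈ [0,1] with θ + μ = 1, one has ‖θξ + μζ‖^p ≤ θ·‖ξ‖^p + μ·‖ζ‖^p − β·θ·μ·(θ^(p−1) + μ^(p−1))·‖ξ − ζ‖^p. -/
open NNReal in
lemma aux_superadd {x y q : ℝ} (hx : 0 ≤ x) (hy : 0 ≤ y) (hq : 1 ≤ q) :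
    x ^ q + y ^ q ≤ (x + y) ^ q := by
  have h := NNReal.add_rpow_le_rpow_add x.toNNReal y.toNNReal hq
  have h2 : ((x.toNNReal ^ q + y.toNNReal ^ q : ℝ≥0) : ℝ)
      ≤ (((x.toNNReal + y.toNNReal) ^ q : ℝ≥0) : ℝ) := by exact_mod_cast h
  simpa [NNReal.coe_rpow, Real.coe_toNNReal _ hx, Real.coe_toNNReal _ hy,
    Real.coe_toNNReal _ (add_nonneg hx hy)] using h2

-- convexity of x ↦ x^q at two points
lemma aux_rpow_cvx {u v q a b : ℝ} (hu : 0 ≤ u) (hv : 0 ≤ v) (hq : 1 ≤ q)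
    (ha : 0 ≤ a) (hb : 0 ≤ b) (hab : a + b = 1) :
    (a * u + b * v) ^ q ≤ a * u ^ q + b * v ^ q := by
  have := (convexOn_rpow hq).2 (Set.mem_Ici.2 hu) (Set.mem_Ici.2 hv) ha hb hab
  simpa [smul_eq_mul] using this

-- convexity of ‖·‖^p
lemma aux_norm_cvx {E : Type*} [NormedAddCommGroup E] [NormedSpace ℝ E]
    (x y : E) {q a b : ℝ} (hq : 1 ≤ q) (ha : 0 ≤ a) (hb : 0 ≤ b) (hab : a + b = 1) :
    ‖a • x + b • y‖ ^ q ≤ a * ‖x‖ ^ q + b * ‖y‖ ^ q := by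
  have h1 : ‖a • x + b • y‖ ≤ a * ‖x‖ + b * ‖y‖ := by
    calc ‖a • x + b • y‖ ≤ ‖a • x‖ + ‖b • y‖ := norm_add_le _ _
      _ = a * ‖x‖ + b * ‖y‖ := by
          rw [norm_smul, norm_smul, Real.norm_of_nonneg ha, Real.norm_of_nonneg hb]
  calc ‖a • x + b • y‖ ^ q ≤ (a * ‖x‖ + b * ‖y‖) ^ q :=
        Real.rpow_le_rpow (norm_nonneg _) h1 (by linarith)
    _ ≤ a * ‖x‖ ^ q + b * ‖y‖ ^ q :=
        aux_rpow_cvx (norm_nonneg _) (norm_nonneg _) hq ha hb hab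

-- midpoint uniform convexity, Clarkson form
lemma aux_clarkson {m : ℕ} (a b : EuclideanSpace ℝ (Fin m)) {p : ℝ} (hp : 2 ≤ p) :
    ‖a‖ ^ p + ‖b‖ ^ p ≤ (‖a + b‖ ^ p + ‖a - b‖ ^ p) / 2 := by
  set q := p / 2 with hqdef
  have hq : 1 ≤ q := by rw [hqdef]; linarith
  have key : ∀ x : ℝ, 0 ≤ x → (x * x) ^ q = x ^ p := by
    intro x hx
    have h2 : x ^ (2:ℝ) = x * x := by
      rw [show (2:ℝ) = ((2:ℕ):ℝ) by norm_num, Real.rpow_natCast]; ring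
    rw [← h2, ← Real.rpow_mul hx]
    congr 1
    rw [hqdef]; ring
  have par : ‖a + b‖ * ‖a + b‖ + ‖a - b‖ * ‖a - b‖ = 2 * (‖a‖ * ‖a‖ + ‖b‖ * ‖b‖) := by
    linear_combination parallelogram_law_with_norm ℝ a b
  calc ‖a‖ ^ p + ‖b‖ ^ p = (‖a‖ * ‖a‖) ^ q + (‖b‖ * ‖b‖) ^ q := by
        rw [key _ (norm_nonneg a), key _ (norm_nonneg b)]
    _ ≤ (‖a‖ * ‖a‖ + ‖b‖ * ‖b‖) ^ q :=
        aux_superadd (mul_self_nonneg _) (mul_self_nonneg _) hq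
    _ = ((1/2) * (‖a + b‖ * ‖a + b‖) + (1/2) * (‖a - b‖ * ‖a - b‖)) ^ q := by
        rw [show (1/2 : ℝ) * (‖a + b‖ * ‖a + b‖) + (1/2) * (‖a - b‖ * ‖a - b‖)
            = (‖a + b‖ * ‖a + b‖ + ‖a - b‖ * ‖a - b‖) / 2 by ring, par]
        ring_nf
    _ ≤ (1/2) * (‖a + b‖ * ‖a + b‖) ^ q + (1/2) * (‖a - b‖ * ‖a - b‖) ^ q :=
        aux_rpow_cvx (mul_self_nonneg _) (mul_self_nonneg _) hq (by norm_num)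
          (by norm_num) (by norm_num)
    _ = (‖a + b‖ ^ p + ‖a - b‖ ^ p) / 2 := by
        rw [key _ (norm_nonneg _), key _ (norm_nonneg _)]; ring

-- midpoint gap
lemma aux_mid {m : ℕ} (ξ ζ : EuclideanSpace ℝ (Fin m)) {p : ℝ} (hp : 2 ≤ p) :
    ‖(1/2 : ℝ) • (ξ + ζ)‖ ^ p
      ≤ (‖ξ‖ ^ p + ‖ζ‖ ^ p) / 2 - (1/2 : ℝ) ^ p * ‖ξ - ζ‖ ^ p := by
  have h := aux_clarkson ((1/2 : ℝ) • (ξ + ζ)) ((1/2 : ℝ) • (ξ - ζ)) hp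
  have e1 : (1/2 : ℝ) • (ξ + ζ) + (1/2 : ℝ) • (ξ - ζ) = ξ := by module
  have e2 : (1/2 : ℝ) • (ξ + ζ) - (1/2 : ℝ) • (ξ - ζ) = ζ := by module
  rw [e1, e2] at h
  have e3 : ‖(1/2 : ℝ) • (ξ - ζ)‖ ^ p = (1/2 : ℝ) ^ p * ‖ξ - ζ‖ ^ p := by
    rw [norm_smul, Real.norm_of_nonneg (by norm_num : (0:ℝ) ≤ 1/2),
      Real.mul_rpow (by norm_num) (norm_nonneg _)]
  rw [e3] at h
  linarith

-- main aux: case θ ≤ 1/2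
lemma aux_half {m : ℕ} (ξ ζ : EuclideanSpace ℝ (Fin m)) {p θ μ : ℝ} (hp : 2 ≤ p)
    (hθ0 : 0 ≤ θ) (hθ : θ ≤ 1/2) (hsum : θ + μ = 1) :
    ‖θ • ξ + μ • ζ‖ ^ p
      ≤ θ * ‖ξ‖ ^ p + μ * ‖ζ‖ ^ p - 2 * θ * (1/2 : ℝ) ^ p * ‖ξ - ζ‖ ^ p := by
  have e : θ • ξ + μ • ζ = (2*θ) • ((1/2 : ℝ) • (ξ + ζ)) + (1 - 2*θ) • ζ := by
    have : μ = 1 - θ := by linarith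
    subst this; module
  have h1 : ‖θ • ξ + μ • ζ‖ ^ p
      ≤ (2*θ) * ‖(1/2 : ℝ) • (ξ + ζ)‖ ^ p + (1 - 2*θ) * ‖ζ‖ ^ p := by
    rw [e]
    exact aux_norm_cvx _ _ (by linarith) (by linarith) (by linarith) (by ring)
  have h2 := aux_mid ξ ζ hp
  nlinarith [norm_nonneg (ξ - ζ), Real.rpow_nonneg (norm_nonneg (ξ - ζ)) p,
    Real.rpow_nonneg (norm_nonneg ξ) p, Real.rpow_nonneg (norm_nonneg ζ) p,
    mul_le_mul_of_nonneg_left h2 (by linarith : (0:ℝ) ≤ 2*θ)]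

lemma aux_rpow_le_self {t p : ℝ} (ht0 : 0 ≤ t) (ht1 : t ≤ 1) (hp : 2 ≤ p) :
    t ^ (p - 1) ≤ t := by
  rcases eq_or_lt_of_le ht0 with h | h
  · rw [← h, Real.zero_rpow (by linarith)]
  · calc t ^ (p - 1) ≤ t ^ (1 : ℝ) :=
        Real.rpow_le_rpow_of_exponent_ge h ht1 (by linarith)
      _ = t := Real.rpow_one t

/-- Uniform strict convexity (Clarkson-type) inequality for the `p`-th power of the Euclidean
norm, `p ≥ 2`: there is `β > 0` with
`‖θξ + μζ‖^p ≤ θ‖ξ‖^p + μ‖ζ‖^p - β θ μ (θ^(p-1) + μ^(p-1)) ‖ξ - ζ‖^p`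
for all `ξ, ζ` and `θ, μ ∈ [0,1]` with `θ + μ = 1`. -/
theorem stmt17 (p : ℝ) (hp : 2 ≤ p) (m : ℕ) (hm : 1 ≤ m) :
    ∃ β : ℝ, 0 < β ∧
      ∀ ξ ζ : EuclideanSpace ℝ (Fin m), ∀ θ μ : ℝ,
        θ ∈ Set.Icc (0 : ℝ) 1 → μ ∈ Set.Icc (0 : ℝ) 1 → θ + μ = 1 →
        ‖θ • ξ + μ • ζ‖ ^ p
          ≤ θ * ‖ξ‖ ^ p + μ * ‖ζ‖ ^ p
            - β * θ * μ * (θ ^ (p - 1) + μ ^ (p - 1)) * ‖ξ - ζ‖ ^ p := by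
  refine ⟨2 * (1/2 : ℝ) ^ p, by positivity, ?_⟩
  intro ξ ζ θ μ hθ hμ hsum
  obtain ⟨hθ0, hθ1⟩ := hθ
  obtain ⟨hμ0, hμ1⟩ := hμ
  have hd : (0:ℝ) ≤ ‖ξ - ζ‖ ^ p := Real.rpow_nonneg (norm_nonneg _) p
  have hhalf : (0:ℝ) < (1/2 : ℝ) ^ p := Real.rpow_pos_of_pos (by norm_num) p
  have hsum' : θ ^ (p-1) + μ ^ (p-1) ≤ 1 := by
    have := aux_rpow_le_self hθ0 hθ1 hp
    have := aux_rpow_le_self hμ0 hμ1 hp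
    linarith
  have hsum0 : 0 ≤ θ ^ (p-1) + μ ^ (p-1) :=
    add_nonneg (Real.rpow_nonneg hθ0 _) (Real.rpow_nonneg hμ0 _)
  rcases le_or_gt θ (1/2 : ℝ) with hc | hc
  · have h := aux_half ξ ζ hp hθ0 hc hsum
    have hkey : 2 * (1/2 : ℝ) ^ p * θ * μ * (θ ^ (p-1) + μ ^ (p-1)) * ‖ξ - ζ‖ ^ p
        ≤ 2 * θ * (1/2 : ℝ) ^ p * ‖ξ - ζ‖ ^ p := by
      have h1 : θ * μ * (θ ^ (p-1) + μ ^ (p-1)) ≤ θ := by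
        calc θ * μ * (θ ^ (p-1) + μ ^ (p-1)) ≤ θ * μ * 1 :=
              mul_le_mul_of_nonneg_left hsum' (mul_nonneg hθ0 hμ0)
          _ ≤ θ := by nlinarith
      have h2 := mul_le_mul_of_nonneg_right h1
        (show (0:ℝ) ≤ 2 * (1/2:ℝ) ^ p * ‖ξ - ζ‖ ^ p by positivity)
      nlinarith [h2]
    linarith
  · have h := aux_half (θ := μ) (μ := θ) ζ ξ hp hμ0 (by linarith) (by linarith)
    rw [add_comm (μ • ζ), norm_sub_rev ζ ξ] at h
    have hkey : 2 * (1/2 : ℝ) ^ p * θ * μ * (θ ^ (p-1) + μ ^ (p-1)) * ‖ξ - ζ‖ ^ p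
        ≤ 2 * μ * (1/2 : ℝ) ^ p * ‖ξ - ζ‖ ^ p := by
      have h1 : θ * μ * (θ ^ (p-1) + μ ^ (p-1)) ≤ μ := by
        calc θ * μ * (θ ^ (p-1) + μ ^ (p-1)) ≤ θ * μ * 1 :=
              mul_le_mul_of_nonneg_left hsum' (mul_nonneg hθ0 hμ0)
          _ ≤ μ := by nlinarith
      have h2 := mul_le_mul_of_nonneg_right h1
        (show (0:ℝ) ≤ 2 * (1/2:ℝ) ^ p * ‖ξ - ζ‖ ^ p by positivity)
      nlinarith [h2]
    linarith
end
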